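/- The infinite product ∏_{k=1}^{∞} (L_{2k+1} + (-1)^{k-1}·√5)/(L_{2k+1} + (-1)^k·√5) converges and equals φ², and ∏_{k=1}^{∞} (L_{2k} + (-1)^{k-1}·√5)/(L_{2k} + (-1)^k·√5) converges and equals φ³, where φ = (1+√5)/2. -/

import Mathlib

noncomputable def phi : ℝ := (1 + Real.sqrt 5) / 2

def lucas : ℕ → ℕ
  | 0 => 2
  | 1 => 1
  | n + 2 => lucas n + lucas (n + 1)

lemma s5 : Real.sqrt 5 ^ 2 = 5 := Real.sq_sqrt (by norm_num)

lemma s5gt : 2 < Real.sqrt 5 := by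
  nlinarith [s5, Real.sqrt_nonneg 5]

lemma s5lt : Real.sqrt 5 < 3 := by
  nlinarith [s5, Real.sqrt_nonneg 5]

lemma phi_sq : phi ^ 2 = phi + 1 := by
  unfold phi; rw [div_pow]; nlinarith [s5]

lemma s5_eq : Real.sqrt 5 = 2 * phi - 1 := by unfold phi; ring

lemma one_lt_phi : 1 < phi := by unfold phi; nlinarith [s5gt]

lemma phi_pos : 0 < phi := by linarith [one_lt_phi]

lemma lucas_eq (n : ℕ) : (lucas n : ℝ) = phi ^ n + (1 - phi) ^ n := by
  induction n using Nat.twoStepInduction with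
  | zero => norm_num [lucas]
  | one => norm_num [lucas]
  | more n ih1 ih2 =>
    show ((lucas n + lucas (n+1) : ℕ) : ℝ) = _
    push_cast [ih1, ih2]
    have h1 : phi ^ (n+2) = phi ^ n * phi ^ 2 := by ring
    have h2 : (1-phi) ^ (n+2) = (1-phi) ^ n * (1-phi) ^ 2 := by ring
    have h3 : (1 - phi) ^ 2 = (1 - phi) + 1 := by nlinarith [phi_sq]
    rw [h1, h2, phi_sq, h3]; ring

lemma lucas_closed (n : ℕ) : (lucas n : ℝ) * phi ^ n = (phi ^ n) ^ 2 + (-1) ^ n := by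
  rw [lucas_eq]
  have : (1 - phi) * phi = -1 := by nlinarith [phi_sq]
  calc (phi ^ n + (1 - phi) ^ n) * phi ^ n
      = (phi ^ n) ^ 2 + ((1-phi) * phi) ^ n := by rw [mul_pow]; ring
    _ = (phi ^ n) ^ 2 + (-1) ^ n := by rw [this]

lemma lucas_ge (n : ℕ) : 3 ≤ lucas (n + 2) := by
  have h1 : ∀ m, 1 ≤ lucas m := by
    intro m
    induction m using Nat.twoStepInduction with
    | zero => norm_num [lucas]
    | one => simp [lucas]
    | more n ih1 ih2 => show 1 ≤ lucas n + lucas (n+1); omega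
  cases n with
  | zero => norm_num [lucas]
  | succ m =>
    show 3 ≤ lucas (m+1) + lucas (m+2)
    have : 2 ≤ lucas (m + 2) := by
      show 2 ≤ lucas m + lucas (m+1); have := h1 m; have := h1 (m+1); omega
    have := h1 (m+1); omega

noncomputable def g (j : ℕ) : ℝ := (phi ^ (2*j+1) - 1) / (phi ^ (2*j+1) + 1)
noncomputable def d (j : ℕ) : ℝ := Real.log (g j)

lemma phipow_gt (j : ℕ) : 1 < phi ^ (2*j+1) :=
  one_lt_pow₀ one_lt_phi (by omega)

lemma g_pos (j : ℕ) : 0 < g j :=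
  div_pos (by linarith [phipow_gt j]) (by linarith [phipow_gt j])

lemma ratio_odd (k : ℕ) :
    ((lucas (2*(k+1)+1) : ℝ) + Real.sqrt 5) / ((lucas (2*(k+1)+1) : ℝ) - Real.sqrt 5)
      = g (k+2) / g k := by
  set s := Real.sqrt 5 with hsdef
  set L : ℝ := (lucas (2*(k+1)+1) : ℝ) with hLdef
  set a : ℝ := phi ^ (2*k+1) with hadef
  have ha1 : 1 < a := phipow_gt k
  have hsl : s < 3 := s5lt
  have hL3 : (3:ℝ) ≤ L := by
    rw [hLdef]
    have h := lucas_ge (2*k+1)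
    have e : 2*(k+1)+1 = 2*k+1+2 := by ring
    rw [e]; exact_mod_cast h
  have hden : (0:ℝ) < L - s := by linarith
  have hg2 : phi ^ (2*(k+2)+1) = a * phi ^ 4 := by rw [hadef, ← pow_add]; ring_nf
  have hLc : L * (a * phi ^ 2) = (a * phi ^ 2) ^ 2 - 1 := by
    have h := lucas_closed (2*(k+1)+1)
    have hm : phi ^ (2*(k+1)+1) = a * phi ^ 2 := by rw [hadef, ← pow_add]; ring_nf
    have hodd : (-1 : ℝ) ^ (2*(k+1)+1) = -1 := Odd.neg_one_pow ⟨k+1, by ring⟩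
    rw [hm, hodd] at h; linarith
  have hs : s = 2 * phi - 1 := s5_eq
  have hp : phi ^ 2 = phi + 1 := phi_sq
  rw [div_eq_div_iff hden.ne' (g_pos k).ne']
  rw [g, g, hg2]
  have h1 : (0:ℝ) < a + 1 := by linarith
  have h2 : (0:ℝ) < a * phi ^ 4 + 1 := by positivity
  rw [← hadef]
  field_simp
  linear_combination (-2*s)*hLc + 2*L*a*phi^2*hs + 2*L*a*(-phi^2+phi-1)*hp

lemma ratio_even (k : ℕ) :
    ((lucas (2*(k+1)) : ℝ) + Real.sqrt 5) / ((lucas (2*(k+1)) : ℝ) - Real.sqrt 5)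
      = 1 / (g (k+1) * g k) := by
  set s := Real.sqrt 5 with hsdef
  set L : ℝ := (lucas (2*(k+1)) : ℝ) with hLdef
  set a : ℝ := phi ^ (2*k+1) with hadef
  have ha1 : 1 < a := phipow_gt k
  have hsl : s < 3 := s5lt
  have hL3 : (3:ℝ) ≤ L := by
    rw [hLdef]
    have h := lucas_ge (2*k)
    have e : 2*(k+1) = 2*k+2 := by ring
    rw [e]; exact_mod_cast h
  have hden : (0:ℝ) < L - s := by linarith
  have hg1 : phi ^ (2*(k+1)+1) = a * phi ^ 2 := by rw [hadef, ← pow_add]; ring_nf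
  have hLc : L * (a * phi) = (a * phi) ^ 2 + 1 := by
    have h := lucas_closed (2*(k+1))
    have hm : phi ^ (2*(k+1)) = a * phi := by
      rw [hadef, show 2*(k+1) = (2*k+1)+1 from by ring, pow_succ]
    have heven : (-1 : ℝ) ^ (2*(k+1)) = 1 := Even.neg_one_pow ⟨k+1, by ring⟩
    rw [hm, heven] at h; linarith
  have hs : s = 2 * phi - 1 := s5_eq
  have hp : phi ^ 2 = phi + 1 := phi_sq
  rw [div_eq_div_iff hden.ne' (mul_pos (g_pos (k+1)) (g_pos k)).ne']
  rw [g, g, hg1]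
  rw [← hadef]
  have h1 : (0:ℝ) < a + 1 := by linarith
  have h2 : (0:ℝ) < a * phi ^ 2 + 1 := by positivity
  field_simp
  linear_combination (-2*s)*hLc + 2*L*a*phi*hs + 2*L*a*hp

lemma lucas_odd_big (k : ℕ) : (3:ℝ) ≤ (lucas (2*(k+1)+1) : ℝ) := by
  have h := lucas_ge (2*k+1)
  have e : 2*(k+1)+1 = 2*k+1+2 := by ring
  rw [e]; exact_mod_cast h

lemma lucas_even_big (k : ℕ) : (3:ℝ) ≤ (lucas (2*(k+1)) : ℝ) := by
  have h := lucas_ge (2*k)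
  have e : 2*(k+1) = 2*k+2 := by ring
  rw [e]; exact_mod_cast h

lemma log_f1 (k : ℕ) :
    Real.log (((lucas (2*(k+1)+1) : ℝ) + (-1:ℝ)^k * Real.sqrt 5) /
      ((lucas (2*(k+1)+1) : ℝ) + (-1:ℝ)^(k+1) * Real.sqrt 5))
    = (-1:ℝ)^(k+2) * d (k+2) - (-1:ℝ)^k * d k := by
  have hL := lucas_odd_big k
  have hs0 : (0:ℝ) < Real.sqrt 5 := by linarith [s5gt]
  have hsl : Real.sqrt 5 < 3 := s5lt
  obtain ⟨m, rfl | rfl⟩ := Nat.even_or_odd' k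
  · have h1 : (-1:ℝ)^(2*m) = 1 := by simp [pow_mul]
    have h2 : (-1:ℝ)^(2*m+1) = -1 := by simp [pow_succ, pow_mul]
    have h3 : (-1:ℝ)^(2*m+2) = 1 := by simp [pow_succ, pow_mul]
    rw [h1, h2, h3, one_mul, neg_one_mul, ← sub_eq_add_neg, ratio_odd,
      Real.log_div (g_pos _).ne' (g_pos _).ne']
    simp [d]
  · have h1 : (-1:ℝ)^(2*m+1) = -1 := by simp [pow_succ, pow_mul]
    have h2 : (-1:ℝ)^(2*m+1+1) = 1 := by simp [pow_succ, pow_mul]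
    have h3 : (-1:ℝ)^(2*m+1+2) = -1 := by simp [pow_succ, pow_mul]
    rw [h1, h2, h3, one_mul, neg_one_mul, ← sub_eq_add_neg]
    have hinv : ((lucas (2*(2*m+1+1)+1) : ℝ) - Real.sqrt 5) /
        ((lucas (2*(2*m+1+1)+1) : ℝ) + Real.sqrt 5) = g (2*m+1) / g (2*m+1+2) := by
      rw [eq_div_iff (g_pos _).ne']
      have h := ratio_odd (2*m+1)
      rw [div_eq_div_iff (by linarith) (g_pos _).ne'] at h
      field_simp at h ⊢
      linarith [h]
    rw [hinv, Real.log_div (g_pos _).ne' (g_pos _).ne']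
    simp only [d]; ring

lemma log_f2 (k : ℕ) :
    Real.log (((lucas (2*(k+1)) : ℝ) + (-1:ℝ)^k * Real.sqrt 5) /
      ((lucas (2*(k+1)) : ℝ) + (-1:ℝ)^(k+1) * Real.sqrt 5))
    = (-1:ℝ)^(k+1) * d (k+1) - (-1:ℝ)^k * d k := by
  have hL := lucas_even_big k
  have hs0 : (0:ℝ) < Real.sqrt 5 := by linarith [s5gt]
  have hsl : Real.sqrt 5 < 3 := s5lt
  obtain ⟨m, rfl | rfl⟩ := Nat.even_or_odd' k
  · have h1 : (-1:ℝ)^(2*m) = 1 := by simp [pow_mul]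
    have h2 : (-1:ℝ)^(2*m+1) = -1 := by simp [pow_succ, pow_mul]
    rw [h1, h2, one_mul, neg_one_mul, ← sub_eq_add_neg, ratio_even,
      Real.log_div one_ne_zero (mul_pos (g_pos _) (g_pos _)).ne',
      Real.log_mul (g_pos _).ne' (g_pos _).ne']
    simp [d]; ring
  · have h1 : (-1:ℝ)^(2*m+1) = -1 := by simp [pow_succ, pow_mul]
    have h2 : (-1:ℝ)^(2*m+1+1) = 1 := by simp [pow_succ, pow_mul]
    rw [h1, h2, one_mul, neg_one_mul, ← sub_eq_add_neg]
    have hinv : ((lucas (2*(2*m+1+1)) : ℝ) - Real.sqrt 5) /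
        ((lucas (2*(2*m+1+1)) : ℝ) + Real.sqrt 5) = g (2*m+1+1) * g (2*m+1) := by
      have h := ratio_even (2*m+1)
      rw [div_eq_div_iff (by linarith) (mul_pos (g_pos _) (g_pos _)).ne'] at h
      rw [div_eq_iff (by linarith)]
      field_simp at h ⊢
      linarith [h]
    rw [hinv, Real.log_mul (g_pos _).ne' (g_pos _).ne']
    simp only [d]; ring

lemma phi_gt : (3:ℝ)/2 < phi := by unfold phi; linarith [s5gt]

lemma summable_d : Summable d := by
  have hb : ∀ j, -d j ≤ 4 * ((phi^2)⁻¹)^j := by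
    intro j
    have hx := phipow_gt j
    set x : ℝ := phi ^ (2*j+1) with hxd
    have hgj : (g j)⁻¹ = (x+1)/(x-1) := by rw [g, inv_div]
    have h1 : -d j = Real.log ((x+1)/(x-1)) := by
      rw [d, ← Real.log_inv, hgj]
    have h2 : Real.log ((x+1)/(x-1)) ≤ (x+1)/(x-1) - 1 :=
      Real.log_le_sub_one_of_pos (by apply div_pos <;> linarith)
    have hx1 : x - 1 ≠ 0 := by linarith
    have h3 : (x+1)/(x-1) - 1 = 2/(x-1) := by field_simp; ring
    have hxl : phi^(2*j) * (1/2) ≤ x - 1 := by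
      have hp1 : (1:ℝ) ≤ phi ^ (2*j) := one_le_pow₀ (le_of_lt one_lt_phi)
      have : x = phi^(2*j) * phi := by rw [hxd, pow_succ]
      nlinarith [phi_gt]
    have h4 : 2/(x-1) ≤ 4 * ((phi^2)⁻¹)^j := by
      have hpj : (0:ℝ) < phi ^ (2*j) := pow_pos phi_pos _
      have he : ((phi^2)⁻¹)^j = (phi^(2*j))⁻¹ := by
        rw [← inv_pow, ← pow_mul, inv_pow]
      rw [he]
      rw [div_le_iff₀ (by linarith)]
      have : (phi^(2*j))⁻¹ * phi^(2*j) = 1 := inv_mul_cancel₀ hpj.ne'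
      nlinarith [this]
    linarith
  have hge : Summable (fun j : ℕ => 4 * ((phi^2)⁻¹)^j) := by
    apply Summable.mul_left
    apply summable_geometric_of_lt_one (by positivity)
    rw [inv_lt_one_iff₀]
    right; nlinarith [phi_gt]
  have hnn : ∀ j, 0 ≤ -d j := by
    intro j
    have h1 : g j ≤ 1 := by
      rw [g, div_le_one (by linarith [phipow_gt j])]; linarith
    have := Real.log_nonpos (le_of_lt (g_pos j)) h1
    simp [d]; linarith [this]
  have : Summable (fun j => -d j) := Summable.of_nonneg_of_le hnn hb hge
  simpa using this.neg

noncomputable def e (j : ℕ) : ℝ := (-1:ℝ)^j * d j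

lemma summable_e : Summable e := by
  apply Summable.of_abs
  apply summable_d.abs.congr
  intro j
  simp [e, abs_mul]

lemma exp_d (j : ℕ) : Real.exp (d j) = g j := Real.exp_log (g_pos j)

lemma g_quot : g 1 / g 0 = phi ^ 2 := by
  rw [g, g]
  norm_num
  have h1 : (0:ℝ) < phi - 1 := by linarith [one_lt_phi]
  have h2 : (0:ℝ) < phi ^ 3 + 1 := by linarith [pow_pos phi_pos 3]
  have h3 : (0:ℝ) < phi + 1 := by linarith [phi_pos]
  have h4 : (0:ℝ) < phi ^ 3 - 1 := by nlinarith [one_lt_phi, phi_pos, sq_nonneg phi]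
  field_simp
  ring_nf
  linear_combination (-phi^4+1)*phi_sq

lemma g_inv : (g 0)⁻¹ = phi ^ 3 := by
  rw [g]
  norm_num
  have h1 : (0:ℝ) < phi - 1 := by linarith [one_lt_phi]
  rw [div_eq_iff h1.ne']
  linear_combination (-phi^2-1)*phi_sq

lemma fac_pos (k : ℕ) {L : ℝ} (h3 : (3:ℝ) ≤ L) : 0 < L + (-1:ℝ)^k * Real.sqrt 5 := by
  have habs : |(-1:ℝ)^k * Real.sqrt 5| = Real.sqrt 5 := by
    rw [abs_mul, abs_pow, abs_neg, abs_one, one_pow, one_mul,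
      abs_of_nonneg (Real.sqrt_nonneg 5)]
  have h := neg_abs_le ((-1:ℝ)^k * Real.sqrt 5)
  rw [habs] at h
  linarith [s5lt]

theorem stmt_19 :
    HasProd (fun k : ℕ =>
        ((lucas (2 * (k + 1) + 1) : ℝ) + (-1 : ℝ) ^ ((k + 1) - 1) * Real.sqrt 5) /
          ((lucas (2 * (k + 1) + 1) : ℝ) + (-1 : ℝ) ^ (k + 1) * Real.sqrt 5)) (phi ^ 2) ∧
    HasProd (fun k : ℕ =>
        ((lucas (2 * (k + 1)) : ℝ) + (-1 : ℝ) ^ ((k + 1) - 1) * Real.sqrt 5) /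
          ((lucas (2 * (k + 1)) : ℝ) + (-1 : ℝ) ^ (k + 1) * Real.sqrt 5)) (phi ^ 3) := by
  have hD := summable_e.hasSum
  set D := ∑' j, e j with hDdef
  constructor
  · have hshift2 : HasSum (fun n => e (n+2)) (D - (e 0 + e 1)) := by
      rw [hasSum_nat_add_iff 2]
      convert hD using 1
      · rfl
      rw [Finset.sum_range_succ, Finset.sum_range_one]
      ring
    have h := hshift2.sub hD
    have hv : D - (e 0 + e 1) - D = d 1 - d 0 := by simp [e]; ring
    rw [hv] at h
    have hsum1 : HasSum (fun k : ℕ => Real.log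
        (((lucas (2*(k+1)+1) : ℝ) + (-1:ℝ)^k * Real.sqrt 5) /
          ((lucas (2*(k+1)+1) : ℝ) + (-1:ℝ)^(k+1) * Real.sqrt 5))) (d 1 - d 0) := by
      have heq : (fun k : ℕ => e (k+2) - e k) = (fun k : ℕ => Real.log
          (((lucas (2*(k+1)+1) : ℝ) + (-1:ℝ)^k * Real.sqrt 5) /
            ((lucas (2*(k+1)+1) : ℝ) + (-1:ℝ)^(k+1) * Real.sqrt 5))) := by
        funext k
        rw [log_f1 k]
        simp [e]
      exact heq ▸ h
    have hp := hsum1.rexp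
    have hval : Real.exp (d 1 - d 0) = phi ^ 2 := by
      rw [Real.exp_sub, exp_d, exp_d, g_quot]
    rw [hval] at hp
    have hfun : ∀ k : ℕ, Real.exp (Real.log
        (((lucas (2*(k+1)+1) : ℝ) + (-1:ℝ)^k * Real.sqrt 5) /
          ((lucas (2*(k+1)+1) : ℝ) + (-1:ℝ)^(k+1) * Real.sqrt 5)))
        = ((lucas (2*(k+1)+1) : ℝ) + (-1:ℝ)^k * Real.sqrt 5) /
          ((lucas (2*(k+1)+1) : ℝ) + (-1:ℝ)^(k+1) * Real.sqrt 5) := by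
      intro k
      exact Real.exp_log (div_pos (fac_pos k (lucas_odd_big k)) (fac_pos (k+1) (lucas_odd_big k)))
    simp only [Nat.add_sub_cancel]
    exact (funext hfun) ▸ hp
  · have hshift1 : HasSum (fun n => e (n+1)) (D - e 0) := by
      rw [hasSum_nat_add_iff 1]
      convert hD using 1
      · rfl
      rw [Finset.sum_range_one]
      ring
    have h := hshift1.sub hD
    have hv : D - e 0 - D = -(d 0) := by simp [e]
    rw [hv] at h
    have hsum2 : HasSum (fun k : ℕ => Real.log
        (((lucas (2*(k+1)) : ℝ) + (-1:ℝ)^k * Real.sqrt 5) /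
          ((lucas (2*(k+1)) : ℝ) + (-1:ℝ)^(k+1) * Real.sqrt 5))) (-(d 0)) := by
      have heq : (fun k : ℕ => e (k+1) - e k) = (fun k : ℕ => Real.log
          (((lucas (2*(k+1)) : ℝ) + (-1:ℝ)^k * Real.sqrt 5) /
            ((lucas (2*(k+1)) : ℝ) + (-1:ℝ)^(k+1) * Real.sqrt 5))) := by
        funext k
        rw [log_f2 k]
        simp [e]
      exact heq ▸ h
    have hp := hsum2.rexp
    have hval : Real.exp (-(d 0)) = phi ^ 3 := by
      rw [Real.exp_neg, exp_d, g_inv]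
    rw [hval] at hp
    have hfun : ∀ k : ℕ, Real.exp (Real.log
        (((lucas (2*(k+1)) : ℝ) + (-1:ℝ)^k * Real.sqrt 5) /
          ((lucas (2*(k+1)) : ℝ) + (-1:ℝ)^(k+1) * Real.sqrt 5)))
        = ((lucas (2*(k+1)) : ℝ) + (-1:ℝ)^k * Real.sqrt 5) /
          ((lucas (2*(k+1)) : ℝ) + (-1:ℝ)^(k+1) * Real.sqrt 5) := by
      intro k
      exact Real.exp_log (div_pos (fac_pos k (lucas_even_big k)) (fac_pos (k+1) (lucas_even_big k)))
    simp only [Nat.add_sub_cancel]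
    exact (funext hfun) ▸ hp
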